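/- If A is an n×m matrix with unit-norm columns satisfying URP, and s has at least m−n elements with absolute value less than α and satisfies ‖As‖ < ε, then ‖s‖ < (M+1)(mα + ε), where M is the maximal left-inverse norm over submatrices of A with at most n columns. -/
import Mathlib


open Matrix Finset Filter

noncomputable def vnorm {k : ℕ} (s : Fin k → ℝ) : ℝ := Real.sqrt (∑ i, (s i)^2)

noncomputable def mnorm {p q : ℕ} (L : Matrix (Fin p) (Fin q) ℝ) : ℝ :=
  Real.sqrt (∑ i, ∑ j, (L i j)^2)

def URP {n m : ℕ} (A : Matrix (Fin n) (Fin m) ℝ) : Prop :=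
  ∀ g : Fin n → Fin m, Function.Injective g → (A.submatrix id g).det ≠ 0

def UnitCols {n m : ℕ} (A : Matrix (Fin n) (Fin m) ℝ) : Prop :=
  ∀ j, vnorm (fun i => A i j) = 1

def LeftInvBound {n m : ℕ} (A : Matrix (Fin n) (Fin m) ℝ) (M : ℝ) : Prop :=
  ∀ (k : ℕ), k ≤ n → ∀ g : Fin k → Fin m, Function.Injective g →
    ∃ L : Matrix (Fin k) (Fin n) ℝ, L * A.submatrix id g = 1 ∧ mnorm L ≤ M

lemma vnorm_nonneg {k : ℕ} (s : Fin k → ℝ) : 0 ≤ vnorm s := Real.sqrt_nonneg _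

lemma vnorm_eq_norm {k : ℕ} (s : Fin k → ℝ) :
    vnorm s = ‖(WithLp.equiv 2 (Fin k → ℝ)).symm s‖ := by
  rw [EuclideanSpace.norm_eq]
  simp [vnorm, Real.norm_eq_abs, sq_abs]

lemma vnorm_add_le {k : ℕ} (a b : Fin k → ℝ) : vnorm (a + b) ≤ vnorm a + vnorm b := by
  rw [vnorm_eq_norm, vnorm_eq_norm, vnorm_eq_norm]
  exact norm_add_le _ _

lemma vnorm_sub_le {k : ℕ} (a b : Fin k → ℝ) : vnorm (a - b) ≤ vnorm a + vnorm b := by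
  rw [vnorm_eq_norm, vnorm_eq_norm, vnorm_eq_norm]
  exact norm_sub_le _ _

lemma vnorm_smul {k : ℕ} (c : ℝ) (v : Fin k → ℝ) : vnorm (c • v) = |c| * vnorm v := by
  rw [vnorm_eq_norm, vnorm_eq_norm]
  rw [show (WithLp.equiv 2 (Fin k → ℝ)).symm (c • v)
      = c • (WithLp.equiv 2 (Fin k → ℝ)).symm v from rfl]
  rw [norm_smul, Real.norm_eq_abs]

lemma vnorm_zero {k : ℕ} : vnorm (0 : Fin k → ℝ) = 0 := by
  simp [vnorm]

lemma vnorm_sum_le {k : ℕ} {ι : Type*} (t : Finset ι) (f : ι → Fin k → ℝ) :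
    vnorm (∑ j ∈ t, f j) ≤ ∑ j ∈ t, vnorm (f j) := by
  classical
  induction t using Finset.cons_induction with
  | empty => simp [vnorm_zero]
  | cons a t ha ih =>
    rw [Finset.sum_cons, Finset.sum_cons]
    exact le_trans (vnorm_add_le _ _) (by linarith)

lemma vnorm_mulVec_le {p q : ℕ} (L : Matrix (Fin p) (Fin q) ℝ) (v : Fin q → ℝ) :
    vnorm (L.mulVec v) ≤ mnorm L * vnorm v := by
  have h1 : ∑ i, (L.mulVec v i)^2 ≤ (∑ i, ∑ j, (L i j)^2) * (∑ j, (v j)^2) := by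
    rw [Finset.sum_mul]
    apply Finset.sum_le_sum
    intro i _
    simpa [Matrix.mulVec, dotProduct] using
      Finset.sum_mul_sq_le_sq_mul_sq Finset.univ (fun j => L i j) v
  calc vnorm (L.mulVec v) ≤ Real.sqrt ((∑ i, ∑ j, (L i j)^2) * (∑ j, (v j)^2)) :=
        Real.sqrt_le_sqrt h1
    _ = mnorm L * vnorm v := by
        rw [Real.sqrt_mul (by positivity)]; rfl

theorem stmt12 {n m : ℕ} (hnm : n < m) (A : Matrix (Fin n) (Fin m) ℝ)
    (hcols : UnitCols A) (hURP : URP A) (M : ℝ) (hM : LeftInvBound A M)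
    (s : Fin m → ℝ) (α ε : ℝ) (hα : 0 < α) (hε : 0 < ε)
    (hcard : (m - n : ℕ) ≤ (Finset.univ.filter fun i => |s i| < α).card)
    (hAs : vnorm (A.mulVec s) < ε) :
    vnorm s < (M + 1) * (m * α + ε) := by
  classical
  set T : Finset (Fin m) := Finset.univ.filter (fun i => α ≤ |s i|) with hTdef
  -- cardinality bound
  have hsplitcard :
      (Finset.univ.filter fun i => |s i| < α).card + T.card = m := by
    have := Finset.card_filter_add_card_filter_not
      (s := (Finset.univ : Finset (Fin m))) (p := fun i => |s i| < α)
    simpa [hTdef, not_lt, Finset.card_univ] using this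
  have hcardT : T.card ≤ n := by omega
  set k := T.card with hk
  set g : Fin k → Fin m := fun p => T.orderEmbOfFin rfl p with hg
  have hginj : Function.Injective g := (T.orderEmbOfFin rfl).injective
  have hgmem : ∀ p, g p ∈ T := fun p => Finset.orderEmbOfFin_mem T rfl p
  have himg : Finset.univ.image g = T := by
    apply Finset.eq_of_subset_of_card_le
    · intro j hj
      rcases Finset.mem_image.mp hj with ⟨p, _, rfl⟩
      exact hgmem p
    · rw [Finset.card_image_of_injective _ hginj, Finset.card_univ, Fintype.card_fin]
  set sT : Fin m → ℝ := fun i => if i ∈ T then s i else 0 with hsT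
  set sS : Fin m → ℝ := fun i => if i ∈ T then 0 else s i with hsS
  have hsplit : s = sT + sS := by
    funext i
    by_cases h : i ∈ T <;> simp [hsT, hsS, h]
  set B : Matrix (Fin n) (Fin k) ℝ := A.submatrix id g with hB
  set x : Fin k → ℝ := fun p => s (g p) with hx
  -- A sT = B x
  have hAsT : A.mulVec sT = B.mulVec x := by
    funext i
    simp only [Matrix.mulVec, dotProduct, hB, Matrix.submatrix_apply, id_eq]
    rw [show (∑ j, A i j * sT j) = ∑ j ∈ T, A i j * s j by
      rw [← himg, Finset.sum_image (fun a _ b _ h => hginj h)]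
      rw [show (∑ j, A i j * sT j) = ∑ j, if j ∈ T then A i j * s j else 0 by
        apply Finset.sum_congr rfl; intro j _
        by_cases h : j ∈ T <;> simp [hsT, h]]
      rw [Finset.sum_ite_mem, Finset.univ_inter, ← himg,
        Finset.sum_image (fun a _ b _ h => hginj h)]]
    rw [← himg, Finset.sum_image (fun a _ b _ h => hginj h)]
  -- vnorm sT = vnorm x
  have hvsT : vnorm sT = vnorm x := by
    unfold vnorm
    congr 1
    rw [show (∑ i, (sT i)^2) = ∑ i, if i ∈ T then (s i)^2 else 0 by
      apply Finset.sum_congr rfl; intro j _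
      by_cases h : j ∈ T <;> simp [hsT, h]]
    rw [Finset.sum_ite_mem, Finset.univ_inter, ← himg,
      Finset.sum_image (fun a _ b _ h => hginj h)]
  have hm1 : (1 : ℝ) ≤ m := by exact_mod_cast Nat.one_le_iff_ne_zero.mpr (by omega)
  -- bound on vnorm sS
  have hvsS : vnorm sS ≤ m * α := by
    have h1 : ∑ i, (sS i)^2 ≤ (m : ℝ) * α^2 := by
      calc ∑ i, (sS i)^2 ≤ ∑ _i : Fin m, α^2 := by
            apply Finset.sum_le_sum
            intro i _
            by_cases h : i ∈ T
            · simp [hsS, h]; positivity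
            · have : |s i| < α := by
                by_contra hc
                exact h (Finset.mem_filter.mpr ⟨Finset.mem_univ i, not_lt.mp hc⟩)
              simp only [hsS, h, if_false]
              calc (s i)^2 = |s i|^2 := (sq_abs _).symm
                _ ≤ α^2 := by nlinarith [abs_nonneg (s i)]
        _ = (m : ℝ) * α^2 := by simp [mul_comm]
    calc vnorm sS ≤ Real.sqrt ((m : ℝ) * α^2) := Real.sqrt_le_sqrt h1
      _ = Real.sqrt m * α := by
          rw [Real.sqrt_mul (by positivity), Real.sqrt_sq hα.le]
      _ ≤ m * α := by
          have hs : Real.sqrt m ≤ m := by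
            calc Real.sqrt m ≤ Real.sqrt ((m:ℝ)^2) := Real.sqrt_le_sqrt (by nlinarith)
              _ = m := Real.sqrt_sq (by positivity)
          nlinarith
  -- bound on vnorm (A sS)
  have hcolsum : A.mulVec sS = ∑ j, sS j • (fun i => A i j) := by
    funext i
    simp [Matrix.mulVec, dotProduct, Finset.sum_apply, mul_comm]
  have hAsS : vnorm (A.mulVec sS) ≤ m * α := by
    rw [hcolsum]
    calc vnorm (∑ j, sS j • (fun i => A i j))
        ≤ ∑ j, vnorm (sS j • (fun i => A i j)) := vnorm_sum_le _ _
      _ = ∑ j, |sS j| := by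
          apply Finset.sum_congr rfl
          intro j _
          rw [vnorm_smul, hcols j, mul_one]
      _ ≤ ∑ _j : Fin m, α := by
          apply Finset.sum_le_sum
          intro j _
          by_cases h : j ∈ T
          · simp [hsS, h]; exact hα.le
          · have : |s j| < α := by
              by_contra hc
              exact h (Finset.mem_filter.mpr ⟨Finset.mem_univ j, not_lt.mp hc⟩)
            simp only [hsS, h, if_false]
            exact this.le
      _ = m * α := by simp [mul_comm]
  -- bound on vnorm (B x)
  have hBx : vnorm (B.mulVec x) ≤ m * α + ε := by
    have h1 : A.mulVec sT = A.mulVec s - A.mulVec sS := by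
      rw [hsplit, Matrix.mulVec_add]; ring_nf
    rw [← hAsT, h1]
    calc vnorm (A.mulVec s - A.mulVec sS)
        ≤ vnorm (A.mulVec s) + vnorm (A.mulVec sS) := vnorm_sub_le _ _
      _ ≤ m * α + ε := by linarith
  -- left inverse
  obtain ⟨L, hLB, hLM⟩ := hM k hcardT g hginj
  have hM0 : 0 ≤ M := by
    obtain ⟨L0, _, h0⟩ := hM 0 (Nat.zero_le n) (fun p => p.elim0) (fun a => a.elim0)
    exact le_trans (Real.sqrt_nonneg _) h0
  have hxL : x = L.mulVec (B.mulVec x) := by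
    rw [Matrix.mulVec_mulVec, hB, hLB, Matrix.one_mulVec]
  have hvx : vnorm x ≤ M * (m * α + ε) := by
    rw [hxL]
    calc vnorm (L.mulVec (B.mulVec x)) ≤ mnorm L * vnorm (B.mulVec x) :=
          vnorm_mulVec_le _ _
      _ ≤ M * (m * α + ε) :=
          mul_le_mul hLM hBx (vnorm_nonneg _) hM0
  -- conclude
  have hfinal : vnorm s ≤ vnorm sT + vnorm sS := by
    rw [hsplit]; exact vnorm_add_le _ _
  rw [hvsT] at hfinal
  nlinarith [vnorm_nonneg s]
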